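/- Let X be a random variable with chi-squared distribution with k degrees of freedom (k a positive integer). Then for any x > 0, P( X ≤ k + 2√(k x) + 2x ) ≥ 1 - exp(-x) and P( X ≥ k - 2√(k x) ) ≥ 1 - exp(-x). -/

import Mathlib

set_option maxHeartbeats 1000000

open MeasureTheory ProbabilityTheory Real Set

-- Chernoff pointwise comparison trick: rate change
lemma chernoff_upper {a r s t : ℝ} (ha : 0 < a) (hr : 0 < r) (hs : 0 < s) (hsr : s < r)
    (ht : 0 ≤ t) :
    gammaMeasure a r (Ici t) ≤ ENNReal.ofReal (Real.exp (-(s*t)) * (r/(r-s))^a) := by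
  set b := r - s with hbdef
  have hb : 0 < b := by simp [hbdef]; linarith
  set C : ℝ := Real.exp (-(s*t)) * (r/b)^a with hC
  have hCnn : 0 ≤ C := by positivity
  have key : ∀ y ∈ Ici t, gammaPDF a r y ≤ ENNReal.ofReal C * gammaPDF a b y := by
    intro y hy
    have hyt : t ≤ y := hy
    have hy0 : 0 ≤ y := le_trans ht hyt
    rw [gammaPDF_of_nonneg hy0, gammaPDF_of_nonneg hy0, ← ENNReal.ofReal_mul hCnn]
    apply ENNReal.ofReal_le_ofReal
    have hrb : (r/b)^a * b^a = r^a := by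
      rw [Real.div_rpow hr.le hb.le, div_mul_cancel₀]
      exact (Real.rpow_pos_of_pos hb a).ne'
    have hexp : Real.exp (-(r*y)) ≤ Real.exp (-(s*t)) * Real.exp (-(b*y)) := by
      rw [← Real.exp_add]
      apply Real.exp_le_exp.mpr
      have : s * t ≤ s * y := mul_le_mul_of_nonneg_left hyt hs.le
      nlinarith
    calc r ^ a / Real.Gamma a * y ^ (a-1) * Real.exp (-(r*y))
        ≤ r ^ a / Real.Gamma a * y ^ (a-1) * (Real.exp (-(s*t)) * Real.exp (-(b*y))) := by
          apply mul_le_mul_of_nonneg_left hexp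
          have := Real.Gamma_pos_of_pos ha
          positivity
      _ = C * (b ^ a / Real.Gamma a * y ^ (a-1) * Real.exp (-(b*y))) := by
          rw [hC, ← hrb]; ring
  calc gammaMeasure a r (Ici t) = ∫⁻ y in Ici t, gammaPDF a r y := by
        rw [gammaMeasure, withDensity_apply _ measurableSet_Ici]
    _ ≤ ∫⁻ y in Ici t, ENNReal.ofReal C * gammaPDF a b y :=
        setLIntegral_mono (((measurable_gammaPDFReal a b).ennreal_ofReal).const_mul _) key
    _ = ENNReal.ofReal C * ∫⁻ y in Ici t, gammaPDF a b y :=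
        lintegral_const_mul _ ((measurable_gammaPDFReal a b).ennreal_ofReal)
    _ ≤ ENNReal.ofReal C * ∫⁻ y, gammaPDF a b y :=
        mul_le_mul_right (setLIntegral_le_lintegral _ _) _
    _ = ENNReal.ofReal C := by rw [lintegral_gammaPDF_eq_one ha hb, mul_one]

lemma chernoff_lower {a r s t : ℝ} (ha : 0 < a) (hr : 0 < r) (hs : 0 < s) :
    gammaMeasure a r (Iic t) ≤ ENNReal.ofReal (Real.exp (s*t) * (r/(r+s))^a) := by
  set b := r + s with hbdef
  have hb : 0 < b := by positivity
  set C : ℝ := Real.exp (s*t) * (r/b)^a with hC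
  have hCnn : 0 ≤ C := by positivity
  have key : ∀ y ∈ Iic t, gammaPDF a r y ≤ ENNReal.ofReal C * gammaPDF a b y := by
    intro y hy
    have hyt : y ≤ t := hy
    rcases lt_or_ge y 0 with hy0 | hy0
    · rw [gammaPDF_of_neg hy0]; exact zero_le
    rw [gammaPDF_of_nonneg hy0, gammaPDF_of_nonneg hy0, ← ENNReal.ofReal_mul hCnn]
    apply ENNReal.ofReal_le_ofReal
    have hrb : (r/b)^a * b^a = r^a := by
      rw [Real.div_rpow hr.le hb.le, div_mul_cancel₀]
      exact (Real.rpow_pos_of_pos hb a).ne'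
    have hexp : Real.exp (-(r*y)) ≤ Real.exp (s*t) * Real.exp (-(b*y)) := by
      rw [← Real.exp_add]
      apply Real.exp_le_exp.mpr
      have : s * y ≤ s * t := mul_le_mul_of_nonneg_left hyt hs.le
      nlinarith
    calc r ^ a / Real.Gamma a * y ^ (a-1) * Real.exp (-(r*y))
        ≤ r ^ a / Real.Gamma a * y ^ (a-1) * (Real.exp (s*t) * Real.exp (-(b*y))) := by
          apply mul_le_mul_of_nonneg_left hexp
          have := Real.Gamma_pos_of_pos ha
          positivity
      _ = C * (b ^ a / Real.Gamma a * y ^ (a-1) * Real.exp (-(b*y))) := by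
          rw [hC, ← hrb]; ring
  calc gammaMeasure a r (Iic t) = ∫⁻ y in Iic t, gammaPDF a r y := by
        rw [gammaMeasure, withDensity_apply _ measurableSet_Iic]
    _ ≤ ∫⁻ y in Iic t, ENNReal.ofReal C * gammaPDF a b y :=
        setLIntegral_mono (((measurable_gammaPDFReal a b).ennreal_ofReal).const_mul _) key
    _ = ENNReal.ofReal C * ∫⁻ y in Iic t, gammaPDF a b y :=
        lintegral_const_mul _ ((measurable_gammaPDFReal a b).ennreal_ofReal)
    _ ≤ ENNReal.ofReal C * ∫⁻ y, gammaPDF a b y :=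
        mul_le_mul_right (setLIntegral_le_lintegral _ _) _
    _ = ENNReal.ofReal C := by rw [lintegral_gammaPDF_eq_one ha hb, mul_one]

-- 1 - w ≤ exp(-w - w^2/2) for w ≥ 0
lemma one_sub_le_exp_quad {w : ℝ} (hw : 0 ≤ w) : 1 - w ≤ Real.exp (-w - w^2/2) := by
  have hmono : MonotoneOn (fun y : ℝ => Real.exp (-y - y^2/2) - 1 + y) (Ici 0) := by
    have hderiv : ∀ y : ℝ, HasDerivAt (fun y : ℝ => Real.exp (-y - y^2/2) - 1 + y)
        (Real.exp (-y - y^2/2) * (-1 - y) + 1) y := by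
      intro y
      have hg : HasDerivAt (fun y : ℝ => -y - y^2/2) (-1 - y) y := by
        have h1 : HasDerivAt (fun y : ℝ => y^2/2) ((2 * y^1)/2) y :=
          (hasDerivAt_pow 2 y).div_const 2
        have := (hasDerivAt_id y).neg.sub h1
        exact this.congr_deriv (by ring)
      have := (hg.exp.sub_const 1).add (hasDerivAt_id y)
      exact this
    apply monotoneOn_of_deriv_nonneg (convex_Ici 0)
    · exact (Continuous.continuousOn (by continuity))
    · intro y _
      exact (hderiv y).differentiableAt.differentiableWithinAt
    · intro y hy
      rw [interior_Ici] at hy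
      rw [(hderiv y).deriv]
      have hy0 : (0:ℝ) < y := hy
      have h1 : Real.exp (-y - y^2/2) ≤ Real.exp (-y) := by
        apply Real.exp_le_exp.mpr; nlinarith
      have h2 : (1 + y) * Real.exp (-y) ≤ 1 := by
        have := Real.add_one_le_exp y
        rw [Real.exp_neg]
        rw [mul_inv_le_iff₀ (Real.exp_pos y)]
        linarith
      have h3 : (1 + y) * Real.exp (-y - y^2/2) ≤ 1 := by
        calc (1 + y) * Real.exp (-y - y^2/2) ≤ (1 + y) * Real.exp (-y) :=
              mul_le_mul_of_nonneg_left h1 (by linarith)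
          _ ≤ 1 := h2
      nlinarith
  have := hmono (self_mem_Ici) (by exact hw : w ∈ Ici 0) hw
  simp at this
  linarith

theorem chi_squared_concentration {Ω : Type*} [MeasureSpace Ω]
    (hP : IsProbabilityMeasure (volume : Measure Ω))
    (k : ℕ) (hk : 0 < k) (X : Ω → ℝ)
    (hX : Measure.map X volume = gammaMeasure ((k : ℝ) / 2) (1 / 2))
    (x : ℝ) (hx : 0 < x) :
    (volume {ω | X ω ≤ (k : ℝ) + 2 * Real.sqrt ((k : ℝ) * x) + 2 * x}).toReal ≥
        1 - Real.exp (-x) ∧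
    (volume {ω | X ω ≥ (k : ℝ) - 2 * Real.sqrt ((k : ℝ) * x)}).toReal ≥
        1 - Real.exp (-x) := by
  set a : ℝ := (k:ℝ)/2 with hadef
  have hkpos : (0:ℝ) < k := Nat.cast_pos.mpr hk
  have ha : 0 < a := by positivity
  have hr : (0:ℝ) < 1/2 := by norm_num
  have hIP : IsProbabilityMeasure (gammaMeasure a (1/2)) := isProbabilityMeasure_gammaMeasure ha hr
  -- X is a.e. measurable
  have hXm : AEMeasurable X volume := by
    by_contra h
    have h1 := hIP.measure_univ
    rw [← hX, Measure.map_of_not_aemeasurable h] at h1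
    simp at h1
  have hmap : ∀ (S : Set ℝ), MeasurableSet S → volume (X ⁻¹' S) = gammaMeasure a (1/2) S := by
    intro S hS
    rw [← hX, Measure.map_apply_of_aemeasurable hXm hS]
  -- substitution v = sqrt (x/k)
  set v : ℝ := Real.sqrt (x / k) with hvdef
  have hv : 0 ≤ v := Real.sqrt_nonneg _
  have hv2 : v^2 = x / k := Real.sq_sqrt (by positivity)
  have hxkv : x = k * v^2 := by rw [hv2]; field_simp
  have hkx : Real.sqrt ((k:ℝ) * x) = k * v := by
    rw [show (k:ℝ) * x = (k:ℝ)^2 * (x/k) by field_simp, Real.sqrt_mul (by positivity),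
      Real.sqrt_sq hkpos.le]
  have hvpos : 0 < v := Real.sqrt_pos.mpr (by positivity)
  constructor
  · -- upper tail
    set t : ℝ := (k:ℝ) + 2 * Real.sqrt ((k:ℝ) * x) + 2 * x with htdef
    have htk : (k:ℝ) < t := by
      rw [htdef]
      have : 0 ≤ Real.sqrt ((k:ℝ)*x) := Real.sqrt_nonneg _
      linarith
    have ht0 : 0 < t := lt_trans hkpos htk
    set s : ℝ := (t - k)/(2*t) with hsdef
    have hs : 0 < s := by apply div_pos <;> [linarith; linarith]
    have hsr : s < 1/2 := by
      rw [hsdef, div_lt_iff₀ (by linarith)]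
      linarith
    have hchern := chernoff_upper ha hr hs hsr ht0.le
    have hst : s * t = (t - k)/2 := by
      rw [hsdef]; field_simp
    have hhalf : (1:ℝ)/2 - s = k/(2*t) := by
      rw [hsdef]; field_simp; ring
    have hratio : (1:ℝ)/2/((1:ℝ)/2 - s) = t/k := by
      rw [hhalf]
      field_simp
    have htk' : t / k = 1 + 2*v + 2*v^2 := by
      have : t = k * (1 + 2*v + 2*v^2) := by
        rw [htdef, hkx, hxkv]; ring
      rw [this]; field_simp
    have hbound : Real.exp (-(s*t)) * ((1:ℝ)/2/((1:ℝ)/2 - s))^a ≤ Real.exp (-x) := by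
      rw [hratio, hst, Real.rpow_def_of_pos (div_pos ht0 hkpos), ← Real.exp_add,
        Real.exp_le_exp]
      have hlog : Real.log (t/k) ≤ 2*v := by
        rw [Real.log_le_iff_le_exp (div_pos ht0 hkpos), htk']
        have := Real.quadratic_le_exp_of_nonneg (by linarith : (0:ℝ) ≤ 2*v)
        nlinarith
      have htkk : t - k = k * (2*v + 2*v^2) := by
        rw [htdef, hkx, hxkv]; ring
      have h1 : Real.log (t/k) * a ≤ k * v := by
        rw [hadef]
        have h2 : Real.log (t/k) * ((k:ℝ)/2) ≤ (2*v) * ((k:ℝ)/2) := by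
          apply mul_le_mul_of_nonneg_right hlog (by positivity)
        calc Real.log (t/k) * ((k:ℝ)/2) ≤ (2*v) * ((k:ℝ)/2) := h2
          _ = k * v := by ring
      rw [hxkv, htkk]
      nlinarith
    have hIoi : gammaMeasure a (1/2) (Set.Ioi t) ≤ ENNReal.ofReal (Real.exp (-x)) :=
      le_trans (measure_mono Set.Ioi_subset_Ici_self)
        (le_trans hchern (ENNReal.ofReal_le_ofReal hbound))
    have hEvent : {ω | X ω ≤ t} = X ⁻¹' (Set.Iic t) := rfl
    rw [hEvent, hmap _ measurableSet_Iic]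
    have hcompl : gammaMeasure a (1/2) (Set.Iic t) = 1 - gammaMeasure a (1/2) (Set.Ioi t) := by
      rw [← Set.compl_Ioi, measure_compl measurableSet_Ioi (measure_ne_top _ _), measure_univ]
    rw [hcompl, ENNReal.toReal_sub_of_le (le_trans hIoi (by
        simp [ENNReal.ofReal_le_one, Real.exp_le_one_iff]; linarith)) ENNReal.one_ne_top,
      ENNReal.toReal_one]
    have := ENNReal.toReal_le_of_le_ofReal (Real.exp_nonneg _) hIoi
    linarith
  · -- lower tail
    set t : ℝ := (k:ℝ) - 2 * Real.sqrt ((k:ℝ) * x) with htdef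
    have hIio : gammaMeasure a (1/2) (Set.Iio t) ≤ ENNReal.ofReal (Real.exp (-x)) := by
      rcases le_or_gt t 0 with ht0 | ht0
      · have : gammaMeasure a (1/2) (Set.Iio t) = 0 := by
          rw [gammaMeasure, withDensity_apply _ measurableSet_Iio,
            lintegral_gammaPDF_of_nonpos ht0]
        rw [this]
        exact zero_le
      · have htk : t < k := by
          rw [htdef]
          have : 0 < Real.sqrt ((k:ℝ)*x) := Real.sqrt_pos.mpr (by positivity)
          linarith
        set s : ℝ := ((k:ℝ) - t)/(2*t) with hsdef
        have hs : 0 < s := by apply div_pos <;> [linarith; linarith]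
        have hchern := chernoff_lower (t := t) ha hr hs
        have hst : s * t = ((k:ℝ) - t)/2 := by
          rw [hsdef]; field_simp
        have hhalf : (1:ℝ)/2 + s = k/(2*t) := by
          rw [hsdef]; field_simp; ring
        have hratio : (1:ℝ)/2/((1:ℝ)/2 + s) = t/k := by
          rw [hhalf]; field_simp
        have hv12 : 2*v < 1 := by
          have : t = k * (1 - 2*v) := by rw [htdef, hkx]; ring
          nlinarith [ht0, this]
        have htk' : t / k = 1 - 2*v := by
          have : t = k * (1 - 2*v) := by rw [htdef, hkx]; ring
          rw [this]; field_simp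
        have hbound : Real.exp (s*t) * ((1:ℝ)/2/((1:ℝ)/2 + s))^a ≤ Real.exp (-x) := by
          rw [hratio, hst, Real.rpow_def_of_pos (div_pos ht0 hkpos), ← Real.exp_add,
            Real.exp_le_exp]
          have hlog : Real.log (t/k) ≤ -(2*v) - 2*v^2 := by
            rw [Real.log_le_iff_le_exp (div_pos ht0 hkpos), htk']
            have := one_sub_le_exp_quad (by linarith : (0:ℝ) ≤ 2*v)
            have heq : -(2*v) - (2*v)^2/2 = -(2*v) - 2*v^2 := by ring
            rw [heq] at this
            exact this
          have htkk : (k:ℝ) - t = k * (2*v) := by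
            rw [htdef, hkx]; ring
          have h1 : Real.log (t/k) * a ≤ (-(2*v) - 2*v^2) * a := by
            apply mul_le_mul_of_nonneg_right hlog ha.le
          rw [hxkv, htkk, hadef]
          rw [hadef] at h1
          nlinarith
        exact le_trans (le_trans (measure_mono Set.Iio_subset_Iic_self) hchern)
          (ENNReal.ofReal_le_ofReal hbound)
    have hEvent : {ω | X ω ≥ t} = X ⁻¹' (Set.Ici t) := rfl
    rw [hEvent, hmap _ measurableSet_Ici]
    have hcompl : gammaMeasure a (1/2) (Set.Ici t) = 1 - gammaMeasure a (1/2) (Set.Iio t) := by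
      rw [← Set.compl_Iio, measure_compl measurableSet_Iio (measure_ne_top _ _), measure_univ]
    rw [hcompl, ENNReal.toReal_sub_of_le (le_trans hIio (by
        simp [ENNReal.ofReal_le_one, Real.exp_le_one_iff]; linarith)) ENNReal.one_ne_top,
      ENNReal.toReal_one]
    have := ENNReal.toReal_le_of_le_ofReal (Real.exp_nonneg _) hIio
    linarith
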